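/- For every real x > 0 and every positive integer k, the inequality (k-1)!/x^k + k!/(2 x^(k+1)) < (-1)^(k+1) * ψ^(k)(x) holds, where ψ^(k) denotes the k-th derivative of the digamma function. -/

import Mathlib

open Real Filter Topology Finset

/-- The digamma function ψ = (log ∘ Γ)'. -/
noncomputable def digamma : ℝ → ℝ := deriv fun x => Real.log (Real.Gamma x)

/-- The k-th derivative of the digamma function. -/
noncomputable def polygamma (k : ℕ) : ℝ → ℝ := iteratedDeriv k digamma

namespace PG

/-- The basic series `∑ 1/(x+n)^m`. -/
noncomputable def T (m : ℕ) (x : ℝ) : ℝ := ∑' n : ℕ, ((x + n) ^ m)⁻¹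

lemma summable_T {a : ℝ} (ha : 0 < a) {m : ℕ} (hm : 2 ≤ m) :
    Summable fun n : ℕ => ((a + n) ^ m)⁻¹ := by
  rw [← summable_nat_add_iff 1]
  have hbase : Summable fun n : ℕ => (((n : ℝ) + 1) ^ 2)⁻¹ := by
    have := (summable_nat_add_iff (f := fun n : ℕ => ((n : ℝ) ^ 2)⁻¹) 1).2
      (by simpa only [one_div] using summable_one_div_nat_pow.2 one_lt_two)
    refine this.congr fun n => ?_
    push_cast
    ring_nf
  refine Summable.of_nonneg_of_le (fun n => by positivity) (fun n => ?_) hbase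
  have h1 : (0:ℝ) < (n : ℝ) + 1 := by positivity
  have h2 : ((n : ℝ) + 1) ^ 2 ≤ (a + ↑(n + 1)) ^ m := by
    calc ((n : ℝ) + 1) ^ 2 ≤ ((n : ℝ) + 1) ^ m := by
          exact pow_le_pow_right₀ (by linarith [Nat.cast_nonneg (α := ℝ) n]) hm
      _ ≤ (a + ↑(n + 1)) ^ m := by
          apply pow_le_pow_left₀ (by positivity)
          push_cast; linarith
  exact inv_anti₀ (by positivity) h2

lemma pair {u v : ℝ} (hv : 0 < v) (huv : v < u) {a b : ℕ} (ha : 0 < a) (hb : 0 < b) :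
    u ^ a * v ^ b + u ^ b * v ^ a < u ^ (a + b) + v ^ (a + b) := by
  have h1 : 0 < u ^ a - v ^ a := sub_pos.2 (pow_lt_pow_left₀ huv hv.le ha.ne')
  have h2 : 0 < u ^ b - v ^ b := sub_pos.2 (pow_lt_pow_left₀ huv hv.le hb.ne')
  have h3 := mul_pos h1 h2
  rw [pow_add, pow_add]
  nlinarith [h3]

lemma trap {u v : ℝ} (hv : 0 < v) (huv : v < u) (h : u - v = u * v) {k : ℕ} (hk : 0 < k) :
    2 * (u ^ k - v ^ k) < (k : ℝ) * (u ^ (k + 1) + v ^ (k + 1)) := by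
  have hu : 0 < u := hv.trans huv
  have expand : u ^ k - v ^ k = ∑ i ∈ range k, u ^ (i + 1) * v ^ (k - i) := by
    rw [← geom_sum₂_mul u v k, h, Finset.sum_mul]
    refine Finset.sum_congr rfl fun i hi => ?_
    rw [Finset.mem_range] at hi
    have : k - 1 - i + 1 = k - i := by omega
    rw [show u ^ i * v ^ (k - 1 - i) * (u * v) = u ^ (i + 1) * v ^ (k - 1 - i + 1) by ring, this]
  have reflect : ∑ i ∈ range k, u ^ (i + 1) * v ^ (k - i)
      = ∑ i ∈ range k, u ^ (k - i) * v ^ (i + 1) := by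
    rw [← Finset.sum_range_reflect (fun i => u ^ (k - i) * v ^ (i + 1)) k]
    refine Finset.sum_congr rfl fun i hi => ?_
    rw [Finset.mem_range] at hi
    rw [show k - (k - 1 - i) = i + 1 by omega, show k - 1 - i + 1 = k - i by omega]
  have key : ∑ i ∈ range k, (u ^ (i + 1) * v ^ (k - i) + u ^ (k - i) * v ^ (i + 1))
      < ∑ i ∈ range k, (u ^ (k + 1) + v ^ (k + 1)) := by
    refine Finset.sum_lt_sum_of_nonempty (Finset.nonempty_range_iff.2 hk.ne') fun i hi => ?_
    rw [Finset.mem_range] at hi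
    have := pair hv huv (a := i + 1) (b := k - i) (by omega) (by omega)
    rwa [show i + 1 + (k - i) = k + 1 by omega] at this
  rw [Finset.sum_add_distrib, ← reflect] at key
  simp only [Finset.sum_const, Finset.card_range, nsmul_eq_mul] at key
  rw [expand]
  linarith

lemma hasSum_telescope {φ : ℕ → ℝ} (hmono : ∀ n, φ (n + 1) ≤ φ n)
    (hlim : Tendsto φ atTop (𝓝 0)) : HasSum (fun n => φ n - φ (n + 1)) (φ 0) := by
  have hanti : Antitone φ := antitone_nat_of_succ_le hmono
  have h0 : ∀ n, 0 ≤ φ n := fun n =>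
    le_of_tendsto hlim (eventually_atTop.2 ⟨n, fun m hm => hanti hm⟩)
  have hsum : Summable fun n => φ n - φ (n + 1) := by
    refine summable_of_sum_range_le (c := φ 0) (fun n => sub_nonneg.2 (hmono n)) fun n => ?_
    rw [Finset.sum_range_sub' φ n]
    linarith [h0 n]
  rw [hasSum_iff_tendsto_nat_of_nonneg (fun n => sub_nonneg.2 (hmono n))]
  have : Tendsto (fun n => φ 0 - φ n) atTop (𝓝 (φ 0 - 0)) := tendsto_const_nhds.sub hlim
  simpa [Finset.sum_range_sub' φ] using this

lemma tendsto_phi {x : ℝ} (hx : 0 < x) {k : ℕ} (hk : 0 < k) :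
    Tendsto (fun n : ℕ => ((x + n) ^ k)⁻¹) atTop (𝓝 0) := by
  apply Tendsto.inv_tendsto_atTop
  apply (tendsto_pow_atTop hk.ne').comp
  exact tendsto_atTop_add_const_left _ x tendsto_natCast_atTop_atTop

lemma T_lower {x : ℝ} (hx : 0 < x) {k : ℕ} (hk : 0 < k) :
    (k : ℝ)⁻¹ * (x ^ k)⁻¹ + (x ^ (k + 1))⁻¹ / 2 < T (k + 1) x := by
  set φ : ℕ → ℝ := fun n => (k : ℝ)⁻¹ * ((x + n) ^ k)⁻¹ with hφ
  set f : ℕ → ℝ := fun n => ((x + n) ^ (k + 1))⁻¹ with hf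
  have hxn : ∀ n : ℕ, (0:ℝ) < x + n := fun n => by positivity
  have hxn1 : ∀ n : ℕ, x + (n:ℝ) < x + (n+1:ℕ) := fun n => by push_cast; linarith
  have hφmono : ∀ n, φ (n + 1) ≤ φ n := by
    intro n
    have := pow_le_pow_left₀ (hxn n).le (hxn1 n).le k
    exact mul_le_mul_of_nonneg_left (inv_anti₀ (by positivity) this) (by positivity)
  have hfmono : ∀ n, f (n + 1) ≤ f n := by
    intro n
    have := pow_le_pow_left₀ (hxn n).le (hxn1 n).le (k + 1)
    exact inv_anti₀ (by positivity) this
  have hb : HasSum (fun n => φ n - φ (n + 1)) (φ 0) :=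
    hasSum_telescope hφmono (by simpa using (tendsto_phi hx hk).const_mul (k:ℝ)⁻¹)
  have hd : HasSum (fun n => (f n - f (n + 1)) / 2) (f 0 / 2) :=
    (hasSum_telescope hfmono (tendsto_phi hx (by omega))).div_const 2
  have hsumf : Summable f := summable_T hx (by omega)
  have key : ∀ n : ℕ, (φ n - φ (n + 1)) + (f n - f (n + 1)) / 2 < f n := by
    intro n
    set y : ℝ := x + n with hy
    have hy0 : 0 < y := hxn n
    have hy1 : x + ((n:ℕ) + 1 : ℕ) = y + 1 := by push_cast [hy]; ring
    set u : ℝ := y⁻¹ with hu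
    set v : ℝ := (y + 1)⁻¹ with hv
    have hv0 : 0 < v := by positivity
    have huv : v < u := by
      apply inv_strictAnti₀ hy0; linarith
    have hrel : u - v = u * v := by
      rw [hu, hv]; field_simp; ring
    have ht := trap hv0 huv hrel hk
    have e1 : φ n = (k:ℝ)⁻¹ * u ^ k := by rw [hφ, hu, inv_pow]
    have e2 : φ (n + 1) = (k:ℝ)⁻¹ * v ^ k := by
      simp only [hφ, hv, inv_pow]
      rw [hy1]
    have e3 : f n = u ^ (k + 1) := by rw [hf, hu, inv_pow]
    have e4 : f (n + 1) = v ^ (k + 1) := by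
      simp only [hf, hv, inv_pow]
      rw [hy1]
    rw [e1, e2, e3, e4]
    have hkpos : (0:ℝ) < k := by exact_mod_cast hk
    have h2 : (k:ℝ)⁻¹ * (2 * (u ^ k - v ^ k)) < (k:ℝ)⁻¹ * ((k:ℝ) * (u ^ (k+1) + v ^ (k+1))) :=
      mul_lt_mul_of_pos_left ht (by positivity)
    have e5 : (k:ℝ)⁻¹ * (2 * (u ^ k - v ^ k))
        = 2 * ((k:ℝ)⁻¹ * u ^ k - (k:ℝ)⁻¹ * v ^ k) := by ring
    have e6 : (k:ℝ)⁻¹ * ((k:ℝ) * (u ^ (k+1) + v ^ (k+1))) = u ^ (k+1) + v ^ (k+1) := by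
      field_simp
    rw [e5, e6] at h2
    linarith
  have hlt : ∑' n, ((φ n - φ (n + 1)) + (f n - f (n + 1)) / 2) < ∑' n, f n := by
    refine Summable.tsum_lt_tsum_of_nonneg (fun n => ?_) (fun n => (key n).le) (key 0) hsumf
    have h1 : 0 ≤ φ n - φ (n + 1) := sub_nonneg.2 (hφmono n)
    have h2 : 0 ≤ f n - f (n + 1) := sub_nonneg.2 (hfmono n)
    linarith
  rw [(hb.add hd).tsum_eq] at hlt
  have e0 : φ 0 = (k:ℝ)⁻¹ * (x ^ k)⁻¹ := by simp [hφ]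
  have e0' : f 0 = (x ^ (k + 1))⁻¹ := by simp [hf]
  rw [e0, e0'] at hlt
  exact hlt


/-- derivative of a single term `z ↦ ((z+c)^m)⁻¹`. -/
lemma hasDerivAt_term (m : ℕ) (hm : 1 ≤ m) (c : ℝ) {y : ℝ} (hy : 0 < y + c) :
    HasDerivAt (fun z => ((z + c) ^ m)⁻¹) (-(m : ℝ) * ((y + c) ^ (m + 1))⁻¹) y := by
  have h1 : HasDerivAt (fun z : ℝ => (z + c) ^ m) ((m : ℝ) * (y + c) ^ (m - 1)) y := by
    simpa using ((hasDerivAt_id y).add_const c).fun_pow m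
  have h2 := h1.fun_inv (pow_ne_zero m hy.ne')
  refine h2.congr_deriv ?_; symm
  have hpow : (y + c) ^ (m + 1) * (y + c) ^ (m - 1) = ((y + c) ^ m) ^ 2 := by
    rw [← pow_add, ← pow_mul]
    congr 1
    omega
  have hne : (y + c) ^ (m + 1) ≠ 0 := pow_ne_zero _ hy.ne'
  have hne2 : ((y + c) ^ m) ^ 2 ≠ 0 := pow_ne_zero _ (pow_ne_zero _ hy.ne')
  field_simp
  linear_combination hpow

lemma hasDerivAt_T {m : ℕ} (hm : 2 ≤ m) {x : ℝ} (hx : 0 < x) :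
    HasDerivAt (T m) (-(m : ℝ) * T (m + 1) x) x := by
  have hx2 : (0 : ℝ) < x / 2 := by positivity
  have hmem : x ∈ Set.Ioi (x / 2) := by simp [Set.mem_Ioi]; linarith
  have key : HasDerivAt (T m) (∑' n : ℕ, -(m : ℝ) * ((x + n) ^ (m + 1))⁻¹) x := by
    refine hasDerivAt_of_tendstoUniformlyOn (l := atTop) (g := T m) (g' := fun y => ∑' n : ℕ, -(m : ℝ) * ((y + n) ^ (m + 1))⁻¹) (f := fun N (y:ℝ) => ∑ n ∈ range N, ((y + n) ^ m)⁻¹)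
      (f' := fun N (y:ℝ) => ∑ n ∈ range N, -(m : ℝ) * ((y + n) ^ (m + 1))⁻¹)
      (isOpen_Ioi (a := x / 2)) ?_ ?_ ?_ hmem
    · refine tendstoUniformlyOn_tsum_nat
        (u := fun n => (m : ℝ) * ((x / 2 + n) ^ (m + 1))⁻¹)
        ((summable_T hx2 (by omega)).mul_left _) fun n y hy => ?_
      rw [Set.mem_Ioi] at hy
      have h1 : (0:ℝ) < x / 2 + n := by positivity
      have h2 : (0:ℝ) < y + n := by have := Nat.cast_nonneg (α := ℝ) n; linarith
      rw [norm_mul, norm_neg, norm_natCast, norm_inv, norm_pow, Real.norm_of_nonneg h2.le]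
      refine mul_le_mul_of_nonneg_left (inv_anti₀ (by positivity) ?_) (by positivity)
      exact pow_le_pow_left₀ h1.le (by linarith) _
    · refine Eventually.of_forall fun N => fun y hy => ?_
      rw [Set.mem_Ioi] at hy
      exact HasDerivAt.fun_sum fun n _ => hasDerivAt_term m (by omega) n
        (by have := Nat.cast_nonneg (α := ℝ) n; linarith)
    · intro y hy
      rw [Set.mem_Ioi] at hy
      exact (summable_T (lt_trans hx2 hy) hm).hasSum.tendsto_sum_nat
  rwa [tsum_mul_left] at key


/-- The series defining digamma on `(0,∞)`. -/
noncomputable def dser : ℝ → ℝ := fun y =>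
  (-eulerMascheroniConstant + -y⁻¹) + ∑' n : ℕ, (((n : ℝ) + 1)⁻¹ - (y + ((n : ℝ) + 1))⁻¹)

lemma term_eq (y c : ℝ) (hy : 0 < y) (hc : 0 < c) :
    c⁻¹ - (y + c)⁻¹ = y / (c * (y + c)) := by
  field_simp; ring

lemma summable_dser_term {y : ℝ} (hy : 0 < y) :
    Summable fun n : ℕ => (((n : ℝ) + 1)⁻¹ - (y + ((n : ℝ) + 1))⁻¹) := by
  have hb : Summable fun n : ℕ => y * ((1 + (n : ℝ)) ^ 2)⁻¹ :=
    (summable_T one_pos le_rfl).mul_left y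
  refine Summable.of_nonneg_of_le (fun n => ?_) (fun n => ?_) hb
  · have h1 : (0:ℝ) < (n : ℝ) + 1 := by positivity
    have h2 : ((n : ℝ) + 1) ≤ y + ((n : ℝ) + 1) := by linarith
    have := inv_anti₀ h1 h2
    linarith
  · have h1 : (0:ℝ) < (n : ℝ) + 1 := by positivity
    rw [term_eq y _ hy h1]
    rw [div_eq_mul_inv]
    refine mul_le_mul_of_nonneg_left (inv_anti₀ (by positivity) ?_) hy.le
    have : ((n:ℝ) + 1) * ((n:ℝ) + 1) = (1 + (n:ℝ)) ^ 2 := by ring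
    nlinarith [Nat.cast_nonneg (α := ℝ) n]

/-- A sequence of identical functions converges uniformly. -/
lemma tuo_self {α : Type*} (f : α → ℝ) (s : Set α) :
    TendstoUniformlyOn (fun _ : ℕ => f) f atTop s := by
  rw [Metric.tendstoUniformlyOn_iff]
  intro ε hε
  filter_upwards [] with n y _
  simpa using hε

lemma digamma_eq {x : ℝ} (hx : 0 < x) : digamma x = dser x := by
  set s : Set ℝ := Set.Ioo (x / 2) (2 * x) with hs
  have hmem : x ∈ s := ⟨by linarith, by linarith⟩
  have hypos : ∀ y ∈ s, (0:ℝ) < y := fun y hy => lt_trans (by positivity) hy.1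
  -- the approximating functions
  set F : ℕ → ℝ → ℝ := fun N y =>
    y * Real.log N + Real.log ((Nat.factorial N : ℕ) : ℝ) - ∑ j ∈ range (N + 1), Real.log (y + j) with hF
  set F' : ℕ → ℝ → ℝ := fun N y => Real.log N - ∑ j ∈ range (N + 1), (y + j)⁻¹ with hF'
  have main : HasDerivAt (fun z => Real.log (Real.Gamma z)) (dser x) x := by
    refine hasDerivAt_of_tendstoUniformlyOn (l := atTop) (f := F) (f' := F')
      (g := fun z => Real.log (Real.Gamma z)) (g' := dser) isOpen_Ioo ?_ ?_ ?_ hmem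
    · -- uniform convergence of derivatives
      have u1 : TendstoUniformlyOn (fun (N : ℕ) (_ : ℝ) => Real.log N - (harmonic N : ℝ))
          (fun _ => -eulerMascheroniConstant) atTop s := by
        apply Filter.Tendsto.tendstoUniformlyOn_const
        have := Real.tendsto_harmonic_sub_log.neg
        simpa [neg_sub] using this
      have u2 : TendstoUniformlyOn (fun (_ : ℕ) (y : ℝ) => -y⁻¹) (fun y => -y⁻¹) atTop s :=
        tuo_self _ _
      have u3 : TendstoUniformlyOn
          (fun N (y : ℝ) => ∑ n ∈ range N, (((n : ℝ) + 1)⁻¹ - (y + ((n : ℝ) + 1))⁻¹))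
          (fun y => ∑' n : ℕ, (((n : ℝ) + 1)⁻¹ - (y + ((n : ℝ) + 1))⁻¹)) atTop s := by
        refine tendstoUniformlyOn_tsum_nat
          (u := fun n => 2 * x * (((n : ℝ) + 1) ^ 2)⁻¹) ?_ fun n y hy => ?_
        · have : Summable fun n : ℕ => ((1 + (n : ℝ)) ^ 2)⁻¹ := summable_T one_pos le_rfl
          refine (this.mul_left (2 * x)).congr fun n => by rw [add_comm 1 (n:ℝ)]
        · have hy0 : (0:ℝ) < y := hypos y hy
          have hy2 : y < 2 * x := hy.2
          have h1 : (0:ℝ) < (n : ℝ) + 1 := by positivity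
          rw [Real.norm_of_nonneg]
          · rw [term_eq y _ hy0 h1, div_eq_mul_inv]
            have hle : ((n:ℝ)+1)^2 ≤ ((n:ℝ)+1) * (y + ((n:ℝ)+1)) := by nlinarith
            calc y * (((n:ℝ)+1) * (y + ((n:ℝ)+1)))⁻¹
                ≤ (2*x) * (((n:ℝ)+1) * (y + ((n:ℝ)+1)))⁻¹ := by
                  apply mul_le_mul_of_nonneg_right hy2.le (by positivity)
              _ ≤ 2 * x * (((n:ℝ)+1)^2)⁻¹ := by
                  apply mul_le_mul_of_nonneg_left (inv_anti₀ (by positivity) hle)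
                    (by positivity)
          · have h2 : (y + ((n:ℝ)+1))⁻¹ ≤ ((n:ℝ)+1)⁻¹ :=
              inv_anti₀ h1 (by linarith)
            linarith
      have hcombined := (u1.add u2).add u3
      refine hcombined.congr ?_ |>.congr_right ?_
      · filter_upwards [] with N y hy
        show _ = F' N y
        rw [hF']
        simp only []
        rw [Finset.sum_range_succ' (fun j => (y + (j:ℝ))⁻¹) N]
        have hharm : (harmonic N : ℝ) = ∑ j ∈ range N, ((j : ℝ) + 1)⁻¹ := by
          rw [harmonic]
          push_cast
          rfl
        simp only [Pi.add_apply]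
        rw [hharm, Finset.sum_sub_distrib]
        push_cast
        ring_nf
      · intro y _
        rfl
    · -- differentiability of F N
      refine Eventually.of_forall fun N y hy => ?_
      have hy0 : (0:ℝ) < y := hypos y hy
      have h1 : HasDerivAt (fun z : ℝ => z * Real.log N + Real.log ((Nat.factorial N : ℕ) : ℝ))
          (Real.log N) y := by
        simpa using ((hasDerivAt_id y).mul_const (Real.log N)).add_const (Real.log ((Nat.factorial N : ℕ) : ℝ))
      have h2 : HasDerivAt (fun z : ℝ => ∑ j ∈ range (N + 1), Real.log (z + j))
          (∑ j ∈ range (N + 1), (y + j)⁻¹) y := by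
        refine HasDerivAt.fun_sum fun j _ => ?_
        have hpos : (0:ℝ) < y + j := by have := Nat.cast_nonneg (α := ℝ) j; linarith
        have := (Real.hasDerivAt_log hpos.ne').comp y ((hasDerivAt_id y).add_const (j:ℝ)); simp at this; exact this
      exact h1.sub h2
    · -- pointwise convergence to log ∘ Gamma
      intro y hy
      have hy0 : (0:ℝ) < y := hypos y hy
      have hG : Tendsto (fun N => Real.log (Real.GammaSeq y N)) atTop
          (𝓝 (Real.log (Real.Gamma y))) :=
        ((Real.continuousAt_log (Real.Gamma_pos_of_pos hy0).ne').tendsto).comp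
          (Real.GammaSeq_tendsto_Gamma y)
      refine hG.congr' ?_
      filter_upwards [eventually_ge_atTop 1] with N hN
      have hNpos : (0:ℝ) < N := by exact_mod_cast hN
      have hprod : ∀ j ∈ range (N + 1), (0:ℝ) < y + j := fun j _ => by
        have := Nat.cast_nonneg (α := ℝ) j; linarith
      have hprodpos : (0:ℝ) < ∏ j ∈ range (N + 1), (y + (j:ℝ)) :=
        Finset.prod_pos hprod
      rw [Real.GammaSeq, Real.log_div (by positivity) hprodpos.ne', Real.log_mul
        (by positivity) (by positivity), Real.log_rpow hNpos,
        Real.log_prod (fun j hj => (hprod j hj).ne')]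
  rw [digamma]
  exact main.deriv


lemma hasDerivAt_dser {x : ℝ} (hx : 0 < x) : HasDerivAt dser (T 2 x) x := by
  have hx2 : (0 : ℝ) < x / 2 := by positivity
  have hmem : x ∈ Set.Ioi (x / 2) := by rw [Set.mem_Ioi]; linarith
  have h1 : HasDerivAt (fun y : ℝ => -eulerMascheroniConstant + -y⁻¹) ((x ^ 2)⁻¹) x := by
    simpa using ((hasDerivAt_inv hx.ne').neg).const_add (-eulerMascheroniConstant)
  have hS : HasDerivAt (fun y : ℝ => ∑' n : ℕ, (((n : ℝ) + 1)⁻¹ - (y + ((n : ℝ) + 1))⁻¹))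
      (∑' n : ℕ, ((x + ((n : ℝ) + 1)) ^ 2)⁻¹) x := by
    refine hasDerivAt_of_tendstoUniformlyOn (l := atTop)
      (f := fun N (y : ℝ) => ∑ n ∈ range N, (((n : ℝ) + 1)⁻¹ - (y + ((n : ℝ) + 1))⁻¹))
      (f' := fun N (y : ℝ) => ∑ n ∈ range N, ((y + ((n : ℝ) + 1)) ^ 2)⁻¹)
      (g := fun y => ∑' n : ℕ, (((n : ℝ) + 1)⁻¹ - (y + ((n : ℝ) + 1))⁻¹))
      (g' := fun y => ∑' n : ℕ, ((y + ((n : ℝ) + 1)) ^ 2)⁻¹)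
      (isOpen_Ioi (a := x / 2)) ?_ ?_ ?_ hmem
    · refine tendstoUniformlyOn_tsum_nat (u := fun n => ((x / 2 + n) ^ 2)⁻¹)
        (summable_T hx2 le_rfl) fun n y hy => ?_
      rw [Set.mem_Ioi] at hy
      have h1 : (0:ℝ) < x / 2 + n := by positivity
      have h2 : (0:ℝ) < y + ((n:ℝ) + 1) := by have := Nat.cast_nonneg (α := ℝ) n; linarith
      rw [norm_inv, norm_pow, Real.norm_of_nonneg h2.le]
      refine inv_anti₀ (by positivity) (pow_le_pow_left₀ h1.le (by linarith) _)
    · refine Eventually.of_forall fun N y hy => ?_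
      rw [Set.mem_Ioi] at hy
      refine HasDerivAt.fun_sum fun n _ => ?_
      have hpos : (0:ℝ) < y + ((n:ℝ) + 1) := by have := Nat.cast_nonneg (α := ℝ) n; linarith
      have := ((hasDerivAt_term 1 le_rfl ((n:ℝ) + 1) hpos).const_sub (((n:ℝ) + 1)⁻¹))
      simpa [pow_one] using this
    · intro y hy
      rw [Set.mem_Ioi] at hy
      exact (summable_dser_term (lt_trans hx2 hy)).hasSum.tendsto_sum_nat
  have hsum := h1.add hS
  have : (x ^ 2)⁻¹ + ∑' n : ℕ, ((x + ((n : ℝ) + 1)) ^ 2)⁻¹ = T 2 x := by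
    rw [T, (summable_T hx le_rfl).tsum_eq_zero_add]
    push_cast
    norm_num
  rw [this] at hsum
  exact hsum

lemma polygamma_eq {k : ℕ} (hk : 1 ≤ k) {x : ℝ} (hx : 0 < x) :
    polygamma k x = (-1) ^ (k + 1) * (Nat.factorial k : ℝ) * T (k + 1) x := by
  induction k, hk using Nat.le_induction generalizing x with
  | base =>
    have hev : digamma =ᶠ[𝓝 x] dser :=
      eventuallyEq_of_mem (Ioi_mem_nhds hx) fun y hy => digamma_eq hy
    have : polygamma 1 x = deriv digamma x := by rw [polygamma, iteratedDeriv_one]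
    rw [this, hev.deriv_eq, (hasDerivAt_dser hx).deriv]
    norm_num
  | succ k hk ih =>
    have hev : polygamma k =ᶠ[𝓝 x]
        (fun y => (-1) ^ (k + 1) * (Nat.factorial k : ℝ) * T (k + 1) y) :=
      eventuallyEq_of_mem (Ioi_mem_nhds hx) fun y hy => ih hy
    have h0 : polygamma (k + 1) x = deriv (polygamma k) x := by
      rw [polygamma, polygamma, iteratedDeriv_succ]
    have hder := (hasDerivAt_T (m := k + 1) (by omega) hx).const_mul
      ((-1 : ℝ) ^ (k + 1) * (Nat.factorial k : ℝ))
    rw [h0, hev.deriv_eq, hder.deriv]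
    have : (k : ℝ) + 1 + 1 = ((k + 1 : ℕ) : ℝ) + 1 := by push_cast; ring
    push_cast [Nat.factorial_succ, pow_succ]
    ring

end PG

theorem stmt_5 (x : ℝ) (hx : 0 < x) (k : ℕ) (hk : 0 < k) :
    ((k - 1).factorial : ℝ) / x ^ k + (k.factorial : ℝ) / (2 * x ^ (k + 1)) < (-1) ^ (k + 1) * polygamma k x := by
  obtain ⟨j, rfl⟩ : ∃ j, k = j + 1 := ⟨k - 1, by omega⟩
  rw [PG.polygamma_eq (by omega) hx]
  have hsign : ((-1 : ℝ) ^ (j + 1 + 1)) * ((-1 : ℝ) ^ (j + 1 + 1)) = 1 := by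
    rw [← pow_add]
    exact Even.neg_one_pow ⟨j + 1 + 1, by ring⟩
  rw [← mul_assoc, ← mul_assoc, hsign, one_mul]
  have h := PG.T_lower hx (k := j + 1) (by omega)
  have hfacpos : (0:ℝ) < ((j + 1).factorial : ℝ) := by positivity
  have h2 := mul_lt_mul_of_pos_left h hfacpos
  have heq : ((j + 1).factorial : ℝ) *
      (((j + 1 : ℕ) : ℝ)⁻¹ * (x ^ (j + 1))⁻¹ + (x ^ (j + 1 + 1))⁻¹ / 2)
      = ((j + 1 - 1).factorial : ℝ) / x ^ (j + 1)
        + ((j + 1).factorial : ℝ) / (2 * x ^ (j + 1 + 1)) := by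
    have hx1 : x ^ (j + 1) ≠ 0 := by positivity
    have hx2 : x ^ (j + 1 + 1) ≠ 0 := by positivity
    simp only [Nat.add_sub_cancel]
    rw [Nat.factorial_succ]
    push_cast
    field_simp
  rw [heq] at h2
  exact h2
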